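/- Let G be a locally compact second-countable Hausdorff topological group, H ⊆ G a closed subgroup with right Haar measure λ, and K ⊆ H a closed subgroup with λ(K) = 0, carrying a right Haar measure μ_K. Let c_0 ∈ G and let X ⊆ Hc_0 be a set such that Xc_0^{-1} is Borel in H. Suppose that for λ-almost every h ∈ H, the set {k ∈ K : k·h·c_0 ∈ X} has μ_K-measure zero. Then λ(Xc_0^{-1}) = 0; that is, X has measure zero with respect to the natural extension of λ to the coset Hc_0. -/

import Mathlib

open MeasureTheory

/-- Fubini-type lemma for cosets.  Let `G` be a locally compact second-countable
Hausdorff group, `H ≤ G` a closed subgroup with right Haar measure `lam`, and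
`K ≤ H` a closed subgroup with `lam K = 0`, carrying a right Haar measure `μK`.
Let `c₀ ∈ G` and let `X` be a subset of the right coset `H·c₀` such that
`X·c₀⁻¹` is Borel in `H`.  If for `lam`-almost every `h ∈ H` the right `K`-coset
section `{k ∈ K : k·h·c₀ ∈ X}` is `μK`-null, then `X` is null with respect to
the natural extension of `lam` to the coset `H·c₀`, i.e. `lam (X·c₀⁻¹) = 0`. -/
theorem coset_fubini_null {G : Type*} [Group G] [TopologicalSpace G]
    [IsTopologicalGroup G] [LocallyCompactSpace G] [SecondCountableTopology G] [T2Space G]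
    [MeasurableSpace G] [BorelSpace G]
    (H : Subgroup G) (hH : IsClosed (H : Set G))
    (lam : Measure ↥H) [lam.IsMulRightInvariant] [IsFiniteMeasureOnCompacts lam]
    [lam.IsOpenPosMeasure]
    (K : Subgroup G) (hKH : K ≤ H) (hK : IsClosed (K : Set G))
    (hKnull : lam {h : ↥H | (h : G) ∈ K} = 0)
    (μK : Measure ↥K) [μK.IsMulRightInvariant] [IsFiniteMeasureOnCompacts μK]
    [μK.IsOpenPosMeasure]
    (c₀ : G) (X : Set G) (hX : X ⊆ {g : G | ∃ h ∈ H, g = h * c₀})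
    (hXmeas : MeasurableSet {h : ↥H | (h : G) * c₀ ∈ X})
    (hsection : ∀ᵐ h : ↥H ∂lam, μK {k : ↥K | (k : G) * (h : G) * c₀ ∈ X} = 0) :
    lam {h : ↥H | (h : G) * c₀ ∈ X} = 0 := by
  haveI : SecondCountableTopology ↥H := TopologicalSpace.Subtype.secondCountableTopology (H : Set G)
  haveI : SecondCountableTopology ↥K := TopologicalSpace.Subtype.secondCountableTopology (K : Set G)
  haveI : BorelSpace ↥H := Subtype.borelSpace (H : Set G)
  haveI : BorelSpace ↥K := Subtype.borelSpace (K : Set G)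
  haveI : LocallyCompactSpace ↥H := hH.locallyCompactSpace
  haveI : LocallyCompactSpace ↥K := hK.locallyCompactSpace
  haveI : SigmaFinite lam := inferInstance
  haveI : SigmaFinite μK := inferInstance
  set S : Set ↥H := {h : ↥H | (h : G) * c₀ ∈ X} with hS
  -- the embedding K → H
  let ι : ↥K → ↥H := fun k => ⟨(k : G), hKH k.2⟩
  have hι : Continuous ι := Continuous.subtype_mk continuous_subtype_val _
  -- the multiplication map
  let f : ↥H × ↥K → ↥H := fun p => ι p.2 * p.1
  have hf : Continuous f := (hι.comp continuous_snd).mul continuous_fst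
  set T : Set (↥H × ↥K) := f ⁻¹' S with hT
  have hTm : MeasurableSet T := hf.measurable hXmeas
  -- the product measure of T is zero
  have hnull : (lam.prod μK) T = 0 := by
    rw [Measure.measure_prod_null hTm]
    filter_upwards [hsection] with h hh
    convert hh using 2
    all_goals rfl
  -- hence a.e. section in the other direction is null
  have h2 : ∀ᵐ k : ↥K ∂μK, lam ((fun h => (h, k)) ⁻¹' T) = 0 := by
    rw [Measure.prod_apply_symm hTm] at hnull
    exact (lintegral_eq_zero_iff (measurable_measure_prodMk_right hTm)).mp hnull
  -- μK is not the zero measure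
  haveI : (ae μK).NeBot := by
    refine ae_neBot.mpr ?_
    have : μK Set.univ ≠ 0 := (isOpen_univ.measure_ne_zero μK ⟨1, trivial⟩)
    intro h; exact this (by simp [h])
  obtain ⟨k, hk⟩ := h2.exists
  -- rewrite the section
  have hk' : lam ((fun h : ↥H => ι k * h) ⁻¹' S) = 0 := by
    convert hk using 2
    rfl
  -- quasi-invariance of right Haar measure under left translation
  set g : ↥H := ι k
  have hinv : lam.inv ((fun x : ↥H => x * g⁻¹) ⁻¹' S⁻¹) = 0 := by
    rw [Measure.inv_apply]
    convert hk' using 2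
    ext x
    simp only [Set.mem_inv, Set.mem_preimage, Set.mem_inv, mul_inv_rev, inv_inv]
  have := (measure_mul_right_null lam.inv (s := S⁻¹) g⁻¹).mp hinv
  rw [Measure.inv_apply] at this
  simpa using this
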